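/- Let (B, H) be a matched pair of Hopf algebras over a field k in which the antipodes S_B and S_H are bijective. Then for all h ∈ H and b ∈ B: (1) S_B⁻¹(h ▷ b) = Σ (h ◁ b₍₂₎) ▷ S_B⁻¹(b₍₁₎), and (2) S_H⁻¹(h ◁ b) = Σ S_H⁻¹(h₍₂₎) ◁ (h₍₁₎ ▷ b). -/

import Mathlib

open TensorProduct

noncomputable section ConvFramework
open Coalgebra

variable {k : Type} [Field k]
variable {C : Type} [AddCommGroup C] [Module k C] [Coalgebra k C]
variable {A : Type} [Ring A] [Algebra k A]

/-- Convolution product on `Hom(C, A)`. -/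
def conv (f g : C →ₗ[k] A) : C →ₗ[k] A :=
  LinearMap.mul' k A ∘ₗ TensorProduct.map f g ∘ₗ Coalgebra.comul

/-- Convolution unit. -/
def cunit : C →ₗ[k] A := Algebra.linearMap k A ∘ₗ Coalgebra.counit

lemma conv_apply (f g : C →ₗ[k] A) {x : C} {ι : Type*} (r : Coalgebra.Repr k x ι) :
    conv f g x = ∑ i ∈ r.index, f (r.left i) * g (r.right i) := by
  have : conv f g x = LinearMap.mul' k A (TensorProduct.map f g (Coalgebra.comul x)) := rfl
  rw [this, ← r.eq, map_sum, map_sum]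
  simp

lemma cunit_apply (x : C) : cunit (k := k) (A := A) x
    = algebraMap k A (Coalgebra.counit (R := k) x) := rfl

lemma sum_counit_smul_left {x : C} {ι : Type*} (r : Coalgebra.Repr k x ι) :
    ∑ i ∈ r.index, Coalgebra.counit (R := k) (r.right i) • r.left i = x := by
  have h := congrArg (TensorProduct.rid k C) (Coalgebra.sum_tmul_counit_eq r)
  rw [map_sum] at h
  simp only [TensorProduct.rid_tmul, one_smul] at h
  exact h

lemma sum_counit_smul_right {x : C} {ι : Type*} (r : Coalgebra.Repr k x ι) :
    ∑ i ∈ r.index, Coalgebra.counit (R := k) (r.left i) • r.right i = x := by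
  have h := congrArg (TensorProduct.lid k C) (Coalgebra.sum_counit_tmul_eq r)
  rw [map_sum] at h
  simp only [TensorProduct.lid_tmul, one_smul] at h
  exact h

lemma conv_cunit_right (f : C →ₗ[k] A) : conv f cunit = f := by
  ext x
  have r := ℛ k x
  rw [conv_apply f cunit r]
  calc ∑ i ∈ r.index, f (r.left i) * cunit (r.right i)
      = ∑ i ∈ r.index, f (Coalgebra.counit (R := k) (r.right i) • r.left i) := by
        refine Finset.sum_congr rfl fun i _ => ?_
        rw [cunit_apply, ← Algebra.commutes, ← Algebra.smul_def, map_smul]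
    _ = f x := by rw [← map_sum, sum_counit_smul_left r]

lemma conv_cunit_left (f : C →ₗ[k] A) : conv cunit f = f := by
  ext x
  have r := ℛ k x
  rw [conv_apply cunit f r]
  calc ∑ i ∈ r.index, cunit (r.left i) * f (r.right i)
      = ∑ i ∈ r.index, f (Coalgebra.counit (R := k) (r.left i) • r.right i) := by
        refine Finset.sum_congr rfl fun i _ => ?_
        rw [cunit_apply, ← Algebra.smul_def, map_smul]
    _ = f x := by rw [← map_sum, sum_counit_smul_right r]

lemma conv_assoc (f g h : C →ₗ[k] A) : conv (conv f g) h = conv f (conv g h) := by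
  ext x
  have r := ℛ k x
  have a₁ : ∀ i, Coalgebra.Repr k (r.left i) (C × C) := fun i => ℛ k (r.left i)
  have a₂ : ∀ i, Coalgebra.Repr k (r.right i) (C × C) := fun i => ℛ k (r.right i)
  have key := Coalgebra.sum_map_tmul_tmul_eq (R := k) f g h x (repr := r) (a₁ := a₁) (a₂ := a₂)
  apply_fun (LinearMap.mul' k A ∘ₗ LinearMap.lTensor A (LinearMap.mul' k A)) at key
  simp only [map_sum, LinearMap.comp_apply, LinearMap.lTensor_tmul, LinearMap.mul'_apply] at key
  calc (conv (conv f g) h) x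
      = ∑ i ∈ r.index, (∑ j ∈ (a₁ i).index,
          f ((a₁ i).left j) * g ((a₁ i).right j)) * h (r.right i) := by
        rw [conv_apply (conv f g) h r]
        exact Finset.sum_congr rfl fun i _ => by rw [conv_apply f g (a₁ i)]
    _ = ∑ i ∈ r.index, ∑ j ∈ (a₁ i).index,
          f ((a₁ i).left j) * (g ((a₁ i).right j) * h (r.right i)) := by
        simp [Finset.sum_mul, mul_assoc]
    _ = ∑ i ∈ r.index, ∑ j ∈ (a₂ i).index,
          f (r.left i) * (g ((a₂ i).left j) * h ((a₂ i).right j)) := key.symm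
    _ = conv f (conv g h) x := by
        rw [conv_apply f (conv g h) r]
        refine (Finset.sum_congr rfl fun i _ => ?_).symm
        rw [conv_apply g h (a₂ i), Finset.mul_sum]

lemma conv_unique {f g₁ g₂ : C →ₗ[k] A} (h1 : conv g₁ f = cunit) (h2 : conv f g₂ = cunit) :
    g₁ = g₂ := by
  have : conv (conv g₁ f) g₂ = conv g₁ (conv f g₂) := conv_assoc g₁ f g₂
  rw [h1, h2, conv_cunit_left, conv_cunit_right] at this
  exact this.symm

end ConvFramework

noncomputable section TmulRepr
open Coalgebra

variable {k : Type} [Field k] {M N : Type} [AddCommGroup M] [AddCommGroup N]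
  [Module k M] [Module k N] [Coalgebra k M] [Coalgebra k N]

/-- A representation of `comul (a ⊗ₜ b)` built from representations of `comul a`, `comul b`. -/
def reprTmul {a : M} {b : N} {ι κ : Type*} (ra : Coalgebra.Repr k a ι) (rb : Coalgebra.Repr k b κ) :
    Coalgebra.Repr k (a ⊗ₜ[k] b) (ι × κ) where
  index := ra.index ×ˢ rb.index
  left p := ra.left p.1 ⊗ₜ[k] rb.left p.2
  right p := ra.right p.1 ⊗ₜ[k] rb.right p.2
  eq := by
    have h : CoalgebraStruct.comul (R := k) (a ⊗ₜ[k] b)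
        = TensorProduct.tensorTensorTensorComm k M M N N
            (CoalgebraStruct.comul (R := k) a ⊗ₜ CoalgebraStruct.comul (R := k) b) := rfl
    rw [h, ← ra.eq, ← rb.eq]
    simp only [TensorProduct.sum_tmul, TensorProduct.tmul_sum, Finset.sum_product, map_sum,
      TensorProduct.tensorTensorTensorComm_tmul]
    exact Finset.sum_comm

lemma counit_tmul (a : M) (b : N) : Coalgebra.counit (R := k) (a ⊗ₜ[k] b)
    = Coalgebra.counit (R := k) a * Coalgebra.counit (R := k) b := by simp [smul_eq_mul, mul_comm]

end TmulRepr

noncomputable section HopfFacts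
open Coalgebra

open HopfAlgebra

variable {k A : Type} [Field k] [Ring A] [HopfAlgebra k A]

lemma antipode_one' : antipode (R := k) (A := A) 1 = 1 := by
  have h := mul_antipode_rTensor_comul_apply (R := k) (A := A) 1
  simpa [Bialgebra.comul_one, Algebra.TensorProduct.one_def] using h

lemma antipode_algebraMap' (c : k) :
    antipode (R := k) (A := A) (algebraMap k A c) = algebraMap k A c := by
  rw [Algebra.algebraMap_eq_smul_one, map_smul, antipode_one']

/-- A representation of `comul (a * b)`. -/
def reprMul {a b : A} {ι κ : Type*} (ra : Coalgebra.Repr k a ι) (rb : Coalgebra.Repr k b κ) :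
    Coalgebra.Repr k (a * b) (ι × κ) where
  index := ra.index ×ˢ rb.index
  left p := ra.left p.1 * rb.left p.2
  right p := ra.right p.1 * rb.right p.2
  eq := by
    rw [Bialgebra.comul_mul, ← ra.eq, ← rb.eq, Finset.sum_mul_sum]
    simp [Finset.sum_product, Algebra.TensorProduct.tmul_mul_tmul]

/-- `S(ab) = S(b) S(a)` via uniqueness of convolution inverses in `Hom(A ⊗ A, A)`. -/
lemma antipode_mul_rev (a b : A) : antipode (R := k) (a * b)
    = antipode (R := k) b * antipode (R := k) a := by
  have c1 : conv (LinearMap.mul' k A)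
      ((antipode (R := k)) ∘ₗ LinearMap.mul' k A) = cunit := by
    apply TensorProduct.ext'
    intro x y
    rw [conv_apply _ _ (reprTmul (ℛ k x) (ℛ k y))]
    have : ∀ p ∈ (reprTmul (ℛ k x) (ℛ k y)).index,
        (LinearMap.mul' k A) ((reprTmul (ℛ k x) (ℛ k y)).left p) *
          ((antipode (R := k)) ∘ₗ LinearMap.mul' k A) ((reprTmul (ℛ k x) (ℛ k y)).right p)
        = (reprMul (ℛ k x) (ℛ k y)).left p
            * antipode (R := k) ((reprMul (ℛ k x) (ℛ k y)).right p) := by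
      intro p _; rfl
    refine (Finset.sum_congr rfl this).trans ?_
    exact (sum_mul_antipode_eq_algebraMap_counit (reprMul (ℛ k x) (ℛ k y))).trans
      (by rw [Bialgebra.counit_mul, cunit_apply, _root_.counit_tmul])
  have c2 : conv (LinearMap.mul' k A ∘ₗ TensorProduct.map (antipode (R := k)) (antipode (R := k))
      ∘ₗ (TensorProduct.comm k A A).toLinearMap) (LinearMap.mul' k A) = cunit := by
    apply TensorProduct.ext'
    intro x y
    have rx := ℛ k x
    have ry := ℛ k y
    rw [conv_apply _ _ (reprTmul rx ry)]
    calc ∑ p ∈ rx.index ×ˢ ry.index, _ * _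
        = ∑ p ∈ rx.index ×ˢ ry.index,
            antipode (R := k) (ry.left p.2) *
              ((antipode (R := k) (rx.left p.1) * rx.right p.1) * ry.right p.2) := by
          refine Finset.sum_congr rfl fun p _ => ?_
          show (antipode (R := k) (ry.left p.2) * antipode (R := k) (rx.left p.1))
              * (rx.right p.1 * ry.right p.2) = _
          rw [mul_assoc, ← mul_assoc (antipode (R := k) (rx.left p.1))]
      _ = ∑ j ∈ ry.index, antipode (R := k) (ry.left j) *
            ((∑ i ∈ rx.index, antipode (R := k) (rx.left i) * rx.right i) * ry.right j) := by
          rw [Finset.sum_product_right]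
          refine Finset.sum_congr rfl fun j _ => ?_
          dsimp only
          rw [← Finset.mul_sum, ← Finset.sum_mul]
      _ = ∑ j ∈ ry.index, algebraMap k A (Coalgebra.counit (R := k) x) *
            (antipode (R := k) (ry.left j) * ry.right j) := by
          rw [sum_antipode_mul_eq_algebraMap_counit rx]
          refine Finset.sum_congr rfl fun j _ => ?_
          rw [← mul_assoc, ← Algebra.commutes, mul_assoc]
      _ = cunit (x ⊗ₜ[k] y) := by
          rw [← Finset.mul_sum, sum_antipode_mul_eq_algebraMap_counit ry, cunit_apply, _root_.counit_tmul, map_mul]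
  have key := conv_unique c2 c1
  have := congr($(key) (a ⊗ₜ[k] b))
  simpa using this.symm

section AntipodeInv

variable (SA' : A →ₗ[k] A)
  (h1 : SA' ∘ₗ antipode (R := k) (A := A) = LinearMap.id)
  (h2 : antipode (R := k) (A := A) ∘ₗ SA' = LinearMap.id)

include h1 in
lemma antipode_injective' : Function.Injective (antipode (R := k) (A := A)) := by
  intro x y hxy
  have e : ∀ z : A, SA' (antipode (R := k) z) = z := fun z => LinearMap.congr_fun h1 z
  have := congr(SA' $hxy)
  rwa [e x, e y] at this

include h1 h2 in
lemma sum_inv_right_mul_left {a : A} {ι : Type*} (r : Coalgebra.Repr k a ι) :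
    ∑ i ∈ r.index, SA' (r.right i) * r.left i
      = algebraMap k A (Coalgebra.counit (R := k) a) := by
  apply antipode_injective' SA' h1
  rw [map_sum, antipode_algebraMap']
  calc ∑ i ∈ r.index, antipode (R := k) (SA' (r.right i) * r.left i)
      = ∑ i ∈ r.index, antipode (R := k) (r.left i) * r.right i := by
        refine Finset.sum_congr rfl fun i _ => ?_
        have e2 : ∀ z : A, antipode (R := k) (SA' z) = z := fun z => LinearMap.congr_fun h2 z
        rw [antipode_mul_rev, e2 (r.right i)]
    _ = algebraMap k A (Coalgebra.counit (R := k) a) := sum_antipode_mul_eq_algebraMap_counit r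

include h1 h2 in
lemma sum_right_mul_inv_left {a : A} {ι : Type*} (r : Coalgebra.Repr k a ι) :
    ∑ i ∈ r.index, r.right i * SA' (r.left i)
      = algebraMap k A (Coalgebra.counit (R := k) a) := by
  apply antipode_injective' SA' h1
  rw [map_sum, antipode_algebraMap']
  calc ∑ i ∈ r.index, antipode (R := k) (r.right i * SA' (r.left i))
      = ∑ i ∈ r.index, r.left i * antipode (R := k) (r.right i) := by
        refine Finset.sum_congr rfl fun i _ => ?_
        have e2 : ∀ z : A, antipode (R := k) (SA' z) = z := fun z => LinearMap.congr_fun h2 z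
        rw [antipode_mul_rev, e2 (r.left i)]
    _ = algebraMap k A (Coalgebra.counit (R := k) a) := sum_mul_antipode_eq_algebraMap_counit r

end AntipodeInv

end HopfFacts

section MatchedPair

variable (k B H : Type) [Field k] [Ring B] [HopfAlgebra k B] [Ring H] [HopfAlgebra k H]

/-- `(B, H)` is a *matched pair* of Hopf algebras: `B` is a left `H`-module coalgebra via
`actL` (`h ⊗ b ↦ h ▷ b`), `H` is a right `B`-module coalgebra via `actR` (`h ⊗ b ↦ h ◁ b`),
and the compatibility conditions of Majid hold. -/
structure MatchedPair (actL : H ⊗[k] B →ₗ[k] B) (actR : H ⊗[k] B →ₗ[k] H) : Prop where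
  /-- `1_H ▷ b = b` -/
  one_actL : ∀ b : B, actL ((1 : H) ⊗ₜ[k] b) = b
  /-- `(gh) ▷ b = g ▷ (h ▷ b)` -/
  mul_actL : ∀ (g h : H) (b : B), actL ((g * h) ⊗ₜ[k] b) = actL (g ⊗ₜ[k] actL (h ⊗ₜ[k] b))
  /-- `h ◁ 1_B = h` -/
  actR_unit : ∀ h : H, actR (h ⊗ₜ[k] (1 : B)) = h
  /-- `h ◁ (bc) = (h ◁ b) ◁ c` -/
  actR_mul' : ∀ (h : H) (b c : B), actR (h ⊗ₜ[k] (b * c)) = actR (actR (h ⊗ₜ[k] b) ⊗ₜ[k] c)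
  /-- `Δ_B(h ▷ b) = Σ (h₍₁₎ ▷ b₍₁₎) ⊗ (h₍₂₎ ▷ b₍₂₎)` -/
  comul_actL : Coalgebra.comul (R := k) ∘ₗ actL
    = TensorProduct.map actL actL
      ∘ₗ (TensorProduct.tensorTensorTensorComm k H H B B).toLinearMap
      ∘ₗ TensorProduct.map (Coalgebra.comul (R := k)) (Coalgebra.comul (R := k))
  /-- `ε_B(h ▷ b) = ε_H(h)ε_B(b)` -/
  counit_actL : Coalgebra.counit (R := k) ∘ₗ actL
    = (TensorProduct.lid k k).toLinearMap
      ∘ₗ TensorProduct.map (Coalgebra.counit (R := k)) (Coalgebra.counit (R := k))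
  /-- `Δ_H(h ◁ b) = Σ (h₍₁₎ ◁ b₍₁₎) ⊗ (h₍₂₎ ◁ b₍₂₎)` -/
  comul_actR : Coalgebra.comul (R := k) ∘ₗ actR
    = TensorProduct.map actR actR
      ∘ₗ (TensorProduct.tensorTensorTensorComm k H H B B).toLinearMap
      ∘ₗ TensorProduct.map (Coalgebra.comul (R := k)) (Coalgebra.comul (R := k))
  /-- `ε_H(h ◁ b) = ε_H(h)ε_B(b)` -/
  counit_actR : Coalgebra.counit (R := k) ∘ₗ actR
    = (TensorProduct.lid k k).toLinearMap
      ∘ₗ TensorProduct.map (Coalgebra.counit (R := k)) (Coalgebra.counit (R := k))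
  /-- `h ▷ 1_B = ε_H(h)1_B` -/
  actL_one : ∀ h : H, actL (h ⊗ₜ[k] (1 : B)) = Coalgebra.counit (R := k) h • (1 : B)
  /-- `1_H ◁ b = ε_B(b)1_H` -/
  one_actR : ∀ b : B, actR ((1 : H) ⊗ₜ[k] b) = Coalgebra.counit (R := k) b • (1 : H)
  /-- `h ▷ (bc) = Σ (h₍₁₎ ▷ b₍₁₎)((h₍₂₎ ◁ b₍₂₎) ▷ c)` -/
  actL_mul : actL ∘ₗ LinearMap.lTensor H (LinearMap.mul' k B)
    = LinearMap.mul' k B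
      ∘ₗ TensorProduct.map actL
          (actL ∘ₗ LinearMap.rTensor B actR ∘ₗ (TensorProduct.assoc k H B B).symm.toLinearMap)
      ∘ₗ (TensorProduct.tensorTensorTensorComm k H H B (B ⊗[k] B)).toLinearMap
      ∘ₗ LinearMap.lTensor (H ⊗[k] H) (TensorProduct.assoc k B B B).toLinearMap
      ∘ₗ LinearMap.rTensor ((B ⊗[k] B) ⊗[k] B) (Coalgebra.comul (R := k))
      ∘ₗ LinearMap.lTensor H (LinearMap.rTensor B (Coalgebra.comul (R := k)))
  /-- `(hg) ◁ b = Σ (h ◁ (g₍₁₎ ▷ b₍₁₎))(g₍₂₎ ◁ b₍₂₎)` -/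
  mul_actR : actR ∘ₗ LinearMap.rTensor B (LinearMap.mul' k H)
    = LinearMap.mul' k H
      ∘ₗ TensorProduct.map (actR ∘ₗ LinearMap.lTensor H actL) actR
      ∘ₗ (TensorProduct.assoc k H (H ⊗[k] B) (H ⊗[k] B)).symm.toLinearMap
      ∘ₗ LinearMap.lTensor H (TensorProduct.tensorTensorTensorComm k H H B B).toLinearMap
      ∘ₗ (TensorProduct.assoc k H (H ⊗[k] H) (B ⊗[k] B)).toLinearMap
      ∘ₗ LinearMap.rTensor (B ⊗[k] B) (LinearMap.lTensor H (Coalgebra.comul (R := k)))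
      ∘ₗ LinearMap.lTensor (H ⊗[k] H) (Coalgebra.comul (R := k))
  /-- `Σ (h₍₁₎ ◁ b₍₁₎) ⊗ (h₍₂₎ ▷ b₍₂₎) = Σ (h₍₂₎ ◁ b₍₂₎) ⊗ (h₍₁₎ ▷ b₍₁₎)` -/
  compat : TensorProduct.map actR actL
      ∘ₗ (TensorProduct.tensorTensorTensorComm k H H B B).toLinearMap
      ∘ₗ TensorProduct.map (Coalgebra.comul (R := k)) (Coalgebra.comul (R := k))
    = TensorProduct.map actR actL
      ∘ₗ (TensorProduct.tensorTensorTensorComm k H H B B).toLinearMap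
      ∘ₗ TensorProduct.map
          ((TensorProduct.comm k H H).toLinearMap ∘ₗ Coalgebra.comul (R := k))
          ((TensorProduct.comm k B B).toLinearMap ∘ₗ Coalgebra.comul (R := k))

end MatchedPair


noncomputable section MPLemmas
set_option synthInstance.maxHeartbeats 1000000
set_option maxHeartbeats 1600000

open HopfAlgebra MulOpposite Coalgebra

variable {k B H : Type} [Field k] [Ring B] [HopfAlgebra k B] [Ring H] [HopfAlgebra k H]
  {actL : H ⊗[k] B →ₗ[k] B} {actR : H ⊗[k] B →ₗ[k] H}

/-- Pointwise form of `comul_actL`, as a representation of `comul (actL (h ⊗ₜ b))`. -/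
def reprActL (hmp : MatchedPair k B H actL actR) {h : H} {b : B}
    {ι κ : Type*} (rh : Coalgebra.Repr k h ι) (rb : Coalgebra.Repr k b κ) :
    Coalgebra.Repr k (actL (h ⊗ₜ[k] b)) (ι × κ) where
  index := rh.index ×ˢ rb.index
  left p := actL (rh.left p.1 ⊗ₜ[k] rb.left p.2)
  right p := actL (rh.right p.1 ⊗ₜ[k] rb.right p.2)
  eq := by
    have hc := LinearMap.congr_fun hmp.comul_actL (h ⊗ₜ[k] b)
    simp only [LinearMap.comp_apply, LinearEquiv.coe_coe, TensorProduct.map_tmul] at hc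
    rw [← rh.eq, ← rb.eq] at hc
    simp only [TensorProduct.sum_tmul, TensorProduct.tmul_sum, map_sum,
      TensorProduct.tensorTensorTensorComm_tmul, TensorProduct.map_tmul] at hc
    rw [Finset.sum_product]
    exact Finset.sum_comm.trans hc.symm

/-- Pointwise form of `comul_actR`. -/
def reprActR (hmp : MatchedPair k B H actL actR) {h : H} {b : B}
    {ι κ : Type*} (rh : Coalgebra.Repr k h ι) (rb : Coalgebra.Repr k b κ) :
    Coalgebra.Repr k (actR (h ⊗ₜ[k] b)) (ι × κ) where
  index := rh.index ×ˢ rb.index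
  left p := actR (rh.left p.1 ⊗ₜ[k] rb.left p.2)
  right p := actR (rh.right p.1 ⊗ₜ[k] rb.right p.2)
  eq := by
    have hc := LinearMap.congr_fun hmp.comul_actR (h ⊗ₜ[k] b)
    simp only [LinearMap.comp_apply, LinearEquiv.coe_coe, TensorProduct.map_tmul] at hc
    rw [← rh.eq, ← rb.eq] at hc
    simp only [TensorProduct.sum_tmul, TensorProduct.tmul_sum, map_sum,
      TensorProduct.tensorTensorTensorComm_tmul, TensorProduct.map_tmul] at hc
    rw [Finset.sum_product]
    exact Finset.sum_comm.trans hc.symm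

lemma counit_actL_pt (hmp : MatchedPair k B H actL actR) (h : H) (b : B) :
    Coalgebra.counit (R := k) (actL (h ⊗ₜ[k] b))
      = Coalgebra.counit (R := k) h * Coalgebra.counit (R := k) b := by
  have hc := LinearMap.congr_fun hmp.counit_actL (h ⊗ₜ[k] b)
  simpa [smul_eq_mul] using hc

lemma counit_actR_pt (hmp : MatchedPair k B H actL actR) (h : H) (b : B) :
    Coalgebra.counit (R := k) (actR (h ⊗ₜ[k] b))
      = Coalgebra.counit (R := k) h * Coalgebra.counit (R := k) b := by
  have hc := LinearMap.congr_fun hmp.counit_actR (h ⊗ₜ[k] b)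
  simpa [smul_eq_mul] using hc

lemma compat_sum (hmp : MatchedPair k B H actL actR) {g : H} {c : B}
    {ι κ : Type*} (rg : Coalgebra.Repr k g ι) (rc : Coalgebra.Repr k c κ) :
    ∑ i ∈ rg.index, ∑ j ∈ rc.index,
        actR (rg.left i ⊗ₜ[k] rc.left j) ⊗ₜ[k] actL (rg.right i ⊗ₜ[k] rc.right j)
      = ∑ i ∈ rg.index, ∑ j ∈ rc.index,
        actR (rg.right i ⊗ₜ[k] rc.right j) ⊗ₜ[k] actL (rg.left i ⊗ₜ[k] rc.left j) := by
  have hc := LinearMap.congr_fun hmp.compat (g ⊗ₜ[k] c)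
  simp only [LinearMap.comp_apply, LinearEquiv.coe_coe, TensorProduct.map_tmul] at hc
  rw [← rg.eq, ← rc.eq] at hc
  simp only [TensorProduct.sum_tmul, TensorProduct.tmul_sum, map_sum,
    TensorProduct.tensorTensorTensorComm_tmul, TensorProduct.map_tmul,
    TensorProduct.comm_tmul] at hc
  exact Finset.sum_comm.trans (hc.trans Finset.sum_comm)

lemma actL_mul_pt (hmp : MatchedPair k B H actL actR) (g : H) (c z : B)
    {ι κ : Type*} (rg : Coalgebra.Repr k g ι) (rc : Coalgebra.Repr k c κ) :
    actL (g ⊗ₜ[k] (c * z)) = ∑ i ∈ rg.index, ∑ j ∈ rc.index,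
      actL (rg.left i ⊗ₜ[k] rc.left j) *
        actL (actR (rg.right i ⊗ₜ[k] rc.right j) ⊗ₜ[k] z) := by
  have hc := LinearMap.congr_fun hmp.actL_mul (g ⊗ₜ[k] (c ⊗ₜ[k] z))
  simp only [LinearMap.comp_apply, LinearEquiv.coe_coe, LinearMap.lTensor_tmul,
    LinearMap.rTensor_tmul, LinearMap.mul'_apply, TensorProduct.map_tmul] at hc
  rw [← rg.eq, ← rc.eq] at hc
  simp only [TensorProduct.sum_tmul, TensorProduct.tmul_sum, map_sum,
    TensorProduct.tensorTensorTensorComm_tmul, TensorProduct.map_tmul,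
    TensorProduct.assoc_tmul, TensorProduct.assoc_symm_tmul, LinearMap.rTensor_tmul,
    LinearMap.lTensor_tmul, LinearMap.comp_apply, LinearMap.mul'_apply,
    LinearEquiv.coe_coe, Finset.sum_apply, LinearMap.coe_sum, map_sum] at hc
  exact hc.trans Finset.sum_comm

lemma mul_actR_pt (hmp : MatchedPair k B H actL actR) (g f : H) (c : B)
    {ι κ : Type*} (rf : Coalgebra.Repr k f ι) (rc : Coalgebra.Repr k c κ) :
    actR ((g * f) ⊗ₜ[k] c) = ∑ i ∈ rf.index, ∑ j ∈ rc.index,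
      actR (g ⊗ₜ[k] actL (rf.left i ⊗ₜ[k] rc.left j)) *
        actR (rf.right i ⊗ₜ[k] rc.right j) := by
  have hc := LinearMap.congr_fun hmp.mul_actR ((g ⊗ₜ[k] f) ⊗ₜ[k] c)
  simp only [LinearMap.comp_apply, LinearEquiv.coe_coe, LinearMap.lTensor_tmul,
    LinearMap.rTensor_tmul, LinearMap.mul'_apply, TensorProduct.map_tmul] at hc
  rw [← rf.eq, ← rc.eq] at hc
  simp only [TensorProduct.sum_tmul, TensorProduct.tmul_sum, map_sum,
    TensorProduct.tensorTensorTensorComm_tmul, TensorProduct.map_tmul,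
    TensorProduct.assoc_tmul, TensorProduct.assoc_symm_tmul, LinearMap.rTensor_tmul,
    LinearMap.lTensor_tmul, LinearMap.comp_apply, LinearMap.mul'_apply,
    LinearEquiv.coe_coe, Finset.sum_apply, LinearMap.coe_sum, map_sum] at hc
  exact hc.trans Finset.sum_comm

/-- Applying a linear map to the coassociativity identity. -/
lemma sum_coassoc_apply {C W : Type} [AddCommGroup C] [Module k C] [Coalgebra k C]
    [AddCommGroup W] [Module k W] {x : C} {ι κ Λ : Type*} (r : Coalgebra.Repr k x ι)
    (a₁ : ∀ i, Coalgebra.Repr k (r.left i) κ) (a₂ : ∀ i, Coalgebra.Repr k (r.right i) Λ)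
    (Ψ : C ⊗[k] (C ⊗[k] C) →ₗ[k] W) :
    ∑ i ∈ r.index, ∑ j ∈ (a₁ i).index,
        Ψ ((a₁ i).left j ⊗ₜ[k] ((a₁ i).right j ⊗ₜ[k] r.right i))
      = ∑ i ∈ r.index, ∑ j ∈ (a₂ i).index,
        Ψ (r.left i ⊗ₜ[k] ((a₂ i).left j ⊗ₜ[k] (a₂ i).right j)) := by
  have key := Coalgebra.sum_tmul_tmul_eq r a₁ a₂
  have := congrArg Ψ key
  simpa only [map_sum] using this

end MPLemmas

noncomputable section MPMain
set_option synthInstance.maxHeartbeats 1000000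
set_option maxHeartbeats 2000000

open HopfAlgebra MulOpposite Coalgebra

variable {k B H : Type} [Field k] [Ring B] [HopfAlgebra k B] [Ring H] [HopfAlgebra k H]
  {actL : H ⊗[k] B →ₗ[k] B} {actR : H ⊗[k] B →ₗ[k] H}

variable (actL actR) in
/-- The candidate for `S_B⁻¹ ∘ actL` : `h ⊗ b ↦ Σ (h ◁ b₍₂₎) ▷ S_B⁻¹(b₍₁₎)`. -/
def Tmap (SB' : B →ₗ[k] B) : H ⊗[k] B →ₗ[k] B :=
  actL ∘ₗ LinearMap.lTensor H SB' ∘ₗ LinearMap.rTensor B actR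
    ∘ₗ (TensorProduct.assoc k H B B).symm.toLinearMap
    ∘ₗ LinearMap.lTensor H
        ((TensorProduct.comm k B B).toLinearMap ∘ₗ Coalgebra.comul (R := k))

variable (actL actR) in
/-- The candidate for `S_H⁻¹ ∘ actR` : `h ⊗ b ↦ Σ S_H⁻¹(h₍₂₎) ◁ (h₍₁₎ ▷ b)`. -/
def Umap (SH' : H →ₗ[k] H) : H ⊗[k] B →ₗ[k] H :=
  actR ∘ₗ LinearMap.rTensor B SH' ∘ₗ LinearMap.lTensor H actL
    ∘ₗ (TensorProduct.assoc k H H B).toLinearMap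
    ∘ₗ LinearMap.rTensor B
        ((TensorProduct.comm k H H).toLinearMap ∘ₗ Coalgebra.comul (R := k))

lemma Tmap_tmul (SB' : B →ₗ[k] B) (g : H) (c : B) {ι : Type*} (rc : Coalgebra.Repr k c ι) :
    Tmap actL actR SB' (g ⊗ₜ[k] c)
      = ∑ m ∈ rc.index, actL (actR (g ⊗ₜ[k] rc.right m) ⊗ₜ[k] SB' (rc.left m)) := by
  have e : Tmap actL actR SB' (g ⊗ₜ[k] c)
      = actL ((LinearMap.lTensor H SB') ((LinearMap.rTensor B actR)
        ((TensorProduct.assoc k H B B).symm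
          (g ⊗ₜ[k] (TensorProduct.comm k B B (Coalgebra.comul (R := k) c)))))) := rfl
  rw [e, ← rc.eq]
  simp [TensorProduct.tmul_sum, map_sum]

lemma Umap_tmul (SH' : H →ₗ[k] H) (g : H) (c : B) {ι : Type*} (rg : Coalgebra.Repr k g ι) :
    Umap actL actR SH' (g ⊗ₜ[k] c)
      = ∑ m ∈ rg.index, actR (SH' (rg.right m) ⊗ₜ[k] actL (rg.left m ⊗ₜ[k] c)) := by
  have e : Umap actL actR SH' (g ⊗ₜ[k] c)
      = actR ((LinearMap.rTensor B SH') ((LinearMap.lTensor H actL)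
        ((TensorProduct.assoc k H H B)
          ((TensorProduct.comm k H H (Coalgebra.comul (R := k) g)) ⊗ₜ[k] c)))) := rfl
  rw [e, ← rg.eq]
  simp [TensorProduct.sum_tmul, map_sum]

/-- The key computation on the `B` side:
`Σ (h₍₂₎ ▷ b₍₂₎) ((h₍₁₎ ◁ b₍₁₎₍₂₎) ▷ S_B⁻¹(b₍₁₎₍₁₎)) = ε(h)ε(b) 1`. -/
lemma keyB (hmp : MatchedPair k B H actL actR) (SB' : B →ₗ[k] B)
    (hSB1 : SB' ∘ₗ HopfAlgebra.antipode (R := k) (A := B) = LinearMap.id)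
    (hSB2 : HopfAlgebra.antipode (R := k) (A := B) ∘ₗ SB' = LinearMap.id)
    (h : H) (b : B) {ι κ : Type*} (rh : Coalgebra.Repr k h ι) (rb : Coalgebra.Repr k b κ) :
    ∑ p ∈ rh.index ×ˢ rb.index,
        actL (rh.right p.1 ⊗ₜ[k] rb.right p.2)
          * Tmap actL actR SB' (rh.left p.1 ⊗ₜ[k] rb.left p.2)
      = algebraMap k B (Coalgebra.counit (R := k) h * Coalgebra.counit (R := k) b) := by
  classical
  let rb1 : ∀ j, Coalgebra.Repr k (rb.left j) (B × B) := fun j => ℛ k (rb.left j)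
  let rb2 : ∀ j, Coalgebra.Repr k (rb.right j) (B × B) := fun j => ℛ k (rb.right j)
  -- the trilinear maps used for the coassociativity rearrangement
  let Ψ : rh.ι → (B ⊗[k] (B ⊗[k] B) →ₗ[k] B) := fun i =>
    LinearMap.mul' k B
      ∘ₗ TensorProduct.map (actL ∘ₗ TensorProduct.mk k H B (rh.right i))
          (actL ∘ₗ TensorProduct.map (actR ∘ₗ TensorProduct.mk k H B (rh.left i)) SB')
      ∘ₗ LinearMap.lTensor B (TensorProduct.comm k B B).toLinearMap
      ∘ₗ (TensorProduct.comm k (B ⊗[k] B) B).toLinearMap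
      ∘ₗ (TensorProduct.assoc k B B B).symm.toLinearMap
  have hΨ : ∀ i (x y z : B), Ψ i (x ⊗ₜ[k] (y ⊗ₜ[k] z))
      = actL (rh.right i ⊗ₜ[k] z) * actL (actR (rh.left i ⊗ₜ[k] y) ⊗ₜ[k] SB' x) := by
    intro i x y z; rfl
  -- the bilinear maps used for the compatibility rearrangement
  let N : rb.ι → (H ⊗[k] B →ₗ[k] B) := fun j =>
    LinearMap.mul' k B
      ∘ₗ TensorProduct.map LinearMap.id
          (actL ∘ₗ (TensorProduct.mk k H B).flip (SB' (rb.left j)))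
      ∘ₗ (TensorProduct.comm k H B).toLinearMap
  have hN : ∀ j (u : H) (v : B), N j (u ⊗ₜ[k] v)
      = v * actL (u ⊗ₜ[k] SB' (rb.left j)) := by
    intro j u v; rfl
  rw [Finset.sum_product]
  calc ∑ i ∈ rh.index, ∑ j ∈ rb.index,
        actL (rh.right i ⊗ₜ[k] rb.right j)
          * Tmap actL actR SB' (rh.left i ⊗ₜ[k] rb.left j)
      = ∑ i ∈ rh.index, ∑ j ∈ rb.index, ∑ m ∈ (rb1 j).index,
          Ψ i ((rb1 j).left m ⊗ₜ[k] ((rb1 j).right m ⊗ₜ[k] rb.right j)) := by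
        refine Finset.sum_congr rfl fun i _ => Finset.sum_congr rfl fun j _ => ?_
        rw [Tmap_tmul SB' _ _ (rb1 j), Finset.mul_sum]
        exact Finset.sum_congr rfl fun m _ => (hΨ i _ _ _).symm
    _ = ∑ i ∈ rh.index, ∑ j ∈ rb.index, ∑ m ∈ (rb2 j).index,
          Ψ i (rb.left j ⊗ₜ[k] ((rb2 j).left m ⊗ₜ[k] (rb2 j).right m)) := by
        exact Finset.sum_congr rfl fun i _ => sum_coassoc_apply rb rb1 rb2 (Ψ i)
    _ = ∑ j ∈ rb.index, ∑ i ∈ rh.index, ∑ m ∈ (rb2 j).index,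
          N j (actR (rh.left i ⊗ₜ[k] (rb2 j).left m)
                ⊗ₜ[k] actL (rh.right i ⊗ₜ[k] (rb2 j).right m)) := by
        rw [Finset.sum_comm]
        refine Finset.sum_congr rfl fun j _ => Finset.sum_congr rfl fun i _ =>
          Finset.sum_congr rfl fun m _ => ?_
        rw [hΨ, hN]
    _ = ∑ j ∈ rb.index, ∑ i ∈ rh.index, ∑ m ∈ (rb2 j).index,
          N j (actR (rh.right i ⊗ₜ[k] (rb2 j).right m)
                ⊗ₜ[k] actL (rh.left i ⊗ₜ[k] (rb2 j).left m)) := by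
        refine Finset.sum_congr rfl fun j _ => ?_
        have := congrArg (N j) (compat_sum hmp rh (rb2 j))
        simpa only [map_sum] using this
    _ = ∑ j ∈ rb.index, actL (h ⊗ₜ[k] (rb.right j * SB' (rb.left j))) := by
        refine Finset.sum_congr rfl fun j _ => ?_
        rw [actL_mul_pt hmp h (rb.right j) (SB' (rb.left j)) rh (rb2 j)]
        exact Finset.sum_congr rfl fun i _ => Finset.sum_congr rfl fun m _ => (hN j _ _)
    _ = actL (h ⊗ₜ[k] algebraMap k B (Coalgebra.counit (R := k) b)) := by
        rw [← sum_right_mul_inv_left SB' hSB1 hSB2 rb, TensorProduct.tmul_sum, map_sum]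
    _ = algebraMap k B (Coalgebra.counit (R := k) h * Coalgebra.counit (R := k) b) := by
        rw [Algebra.algebraMap_eq_smul_one (Coalgebra.counit (R := k) b), TensorProduct.tmul_smul,
          map_smul, hmp.actL_one h, Algebra.algebraMap_eq_smul_one, smul_smul, mul_comm]

/-- The key computation on the `H` side:
`Σ (S_H⁻¹(h₍₂₎₍₂₎) ◁ (h₍₂₎₍₁₎ ▷ b₍₂₎)) (h₍₁₎ ◁ b₍₁₎) = ε(h)ε(b) 1`. -/
lemma keyH (hmp : MatchedPair k B H actL actR) (SH' : H →ₗ[k] H)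
    (hSH1 : SH' ∘ₗ HopfAlgebra.antipode (R := k) (A := H) = LinearMap.id)
    (hSH2 : HopfAlgebra.antipode (R := k) (A := H) ∘ₗ SH' = LinearMap.id)
    (h : H) (b : B) {ι κ : Type*} (rh : Coalgebra.Repr k h ι) (rb : Coalgebra.Repr k b κ) :
    ∑ p ∈ rh.index ×ˢ rb.index,
        Umap actL actR SH' (rh.right p.1 ⊗ₜ[k] rb.right p.2)
          * actR (rh.left p.1 ⊗ₜ[k] rb.left p.2)
      = algebraMap k H (Coalgebra.counit (R := k) h * Coalgebra.counit (R := k) b) := by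
  classical
  let rh1 : ∀ i, Coalgebra.Repr k (rh.left i) (H × H) := fun i => ℛ k (rh.left i)
  let rh2 : ∀ i, Coalgebra.Repr k (rh.right i) (H × H) := fun i => ℛ k (rh.right i)
  let Ψ : rb.ι → (H ⊗[k] (H ⊗[k] H) →ₗ[k] H) := fun j =>
    LinearMap.mul' k H
      ∘ₗ TensorProduct.map
          (actR ∘ₗ TensorProduct.map SH'
            (actL ∘ₗ (TensorProduct.mk k H B).flip (rb.right j)))
          (actR ∘ₗ (TensorProduct.mk k H B).flip (rb.left j))
      ∘ₗ (TensorProduct.assoc k H H H).symm.toLinearMap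
      ∘ₗ LinearMap.lTensor H (TensorProduct.comm k H H).toLinearMap
      ∘ₗ (TensorProduct.comm k (H ⊗[k] H) H).toLinearMap
      ∘ₗ (TensorProduct.assoc k H H H).symm.toLinearMap
  have hΨ : ∀ j (x y z : H), Ψ j (x ⊗ₜ[k] (y ⊗ₜ[k] z))
      = actR (SH' z ⊗ₜ[k] actL (y ⊗ₜ[k] rb.right j)) * actR (x ⊗ₜ[k] rb.left j) := by
    intro j x y z; rfl
  let N : rh.ι → (H ⊗[k] B →ₗ[k] H) := fun i =>
    LinearMap.mul' k H
      ∘ₗ TensorProduct.map (actR ∘ₗ TensorProduct.mk k H B (SH' (rh.right i))) LinearMap.id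
      ∘ₗ (TensorProduct.comm k H B).toLinearMap
  have hN : ∀ i (u : H) (v : B), N i (u ⊗ₜ[k] v)
      = actR (SH' (rh.right i) ⊗ₜ[k] v) * u := by
    intro i u v; rfl
  rw [Finset.sum_product]
  calc ∑ i ∈ rh.index, ∑ j ∈ rb.index,
        Umap actL actR SH' (rh.right i ⊗ₜ[k] rb.right j)
          * actR (rh.left i ⊗ₜ[k] rb.left j)
      = ∑ j ∈ rb.index, ∑ i ∈ rh.index, ∑ m ∈ (rh2 i).index,
          Ψ j (rh.left i ⊗ₜ[k] ((rh2 i).left m ⊗ₜ[k] (rh2 i).right m)) := by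
        rw [Finset.sum_comm]
        refine Finset.sum_congr rfl fun j _ => Finset.sum_congr rfl fun i _ => ?_
        rw [Umap_tmul SH' _ _ (rh2 i), Finset.sum_mul]
        exact Finset.sum_congr rfl fun m _ => (hΨ j _ _ _).symm
    _ = ∑ j ∈ rb.index, ∑ i ∈ rh.index, ∑ m ∈ (rh1 i).index,
          Ψ j ((rh1 i).left m ⊗ₜ[k] ((rh1 i).right m ⊗ₜ[k] rh.right i)) := by
        exact Finset.sum_congr rfl fun j _ => (sum_coassoc_apply rh rh1 rh2 (Ψ j)).symm
    _ = ∑ i ∈ rh.index, ∑ m ∈ (rh1 i).index, ∑ j ∈ rb.index,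
          N i (actR ((rh1 i).left m ⊗ₜ[k] rb.left j)
                ⊗ₜ[k] actL ((rh1 i).right m ⊗ₜ[k] rb.right j)) := by
        rw [Finset.sum_comm]
        refine Finset.sum_congr rfl fun i _ => ?_
        rw [Finset.sum_comm]
        refine Finset.sum_congr rfl fun m _ => Finset.sum_congr rfl fun j _ => ?_
        rw [hΨ, hN]
    _ = ∑ i ∈ rh.index, ∑ m ∈ (rh1 i).index, ∑ j ∈ rb.index,
          N i (actR ((rh1 i).right m ⊗ₜ[k] rb.right j)
                ⊗ₜ[k] actL ((rh1 i).left m ⊗ₜ[k] rb.left j)) := by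
        refine Finset.sum_congr rfl fun i _ => ?_
        have := congrArg (N i) (compat_sum hmp (rh1 i) rb)
        simpa only [map_sum] using this
    _ = ∑ i ∈ rh.index, actR ((SH' (rh.right i) * rh.left i) ⊗ₜ[k] b) := by
        refine Finset.sum_congr rfl fun i _ => ?_
        rw [mul_actR_pt hmp (SH' (rh.right i)) (rh.left i) b (rh1 i) rb]
        exact Finset.sum_congr rfl fun m _ => Finset.sum_congr rfl fun j _ => (hN i _ _)
    _ = actR (algebraMap k H (Coalgebra.counit (R := k) h) ⊗ₜ[k] b) := by
        rw [← sum_inv_right_mul_left SH' hSH1 hSH2 rh, TensorProduct.sum_tmul, map_sum]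
    _ = algebraMap k H (Coalgebra.counit (R := k) h * Coalgebra.counit (R := k) b) := by
        rw [Algebra.algebraMap_eq_smul_one (Coalgebra.counit (R := k) h),
          ← TensorProduct.smul_tmul', map_smul, hmp.one_actR b, Algebra.algebraMap_eq_smul_one,
          smul_smul]

end MPMain

noncomputable section MPConv
set_option synthInstance.maxHeartbeats 1000000
set_option maxHeartbeats 2000000

open HopfAlgebra MulOpposite Coalgebra

variable {k B H : Type} [Field k] [Ring B] [HopfAlgebra k B] [Ring H] [HopfAlgebra k H]
  {actL : H ⊗[k] B →ₗ[k] B} {actR : H ⊗[k] B →ₗ[k] H}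

lemma convA (hmp : MatchedPair k B H actL actR) (SB' : B →ₗ[k] B)
    (hSB1 : SB' ∘ₗ HopfAlgebra.antipode (R := k) (A := B) = LinearMap.id)
    (hSB2 : HopfAlgebra.antipode (R := k) (A := B) ∘ₗ SB' = LinearMap.id) :
    conv ((opLinearEquiv k : B ≃ₗ[k] Bᵐᵒᵖ).toLinearMap ∘ₗ actL)
        ((opLinearEquiv k : B ≃ₗ[k] Bᵐᵒᵖ).toLinearMap ∘ₗ SB' ∘ₗ actL) = cunit := by
  apply TensorProduct.ext'
  intro h b
  rw [conv_apply _ _ (reprTmul (ℛ k h) (ℛ k b))]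
  have step : ∀ p ∈ (reprTmul (ℛ k h) (ℛ k b)).index,
      ((opLinearEquiv k : B ≃ₗ[k] Bᵐᵒᵖ).toLinearMap ∘ₗ actL)
          ((reprTmul (ℛ k h) (ℛ k b)).left p)
        * ((opLinearEquiv k : B ≃ₗ[k] Bᵐᵒᵖ).toLinearMap ∘ₗ SB' ∘ₗ actL)
          ((reprTmul (ℛ k h) (ℛ k b)).right p)
      = (opLinearEquiv k : B ≃ₗ[k] Bᵐᵒᵖ).toLinearMap
          (SB' ((reprActL hmp (ℛ k h) (ℛ k b)).right p)
            * (reprActL hmp (ℛ k h) (ℛ k b)).left p) := fun p _ => rfl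
  refine (Finset.sum_congr rfl step).trans ?_
  rw [← map_sum]
  refine (congrArg _ ((sum_inv_right_mul_left SB' hSB1 hSB2
    (reprActL hmp (ℛ k h) (ℛ k b))).trans
      (by rw [counit_actL_pt hmp]))).trans ?_
  rw [cunit_apply, _root_.counit_tmul]; rfl

lemma convC (hmp : MatchedPair k B H actL actR) (SH' : H →ₗ[k] H)
    (hSH1 : SH' ∘ₗ HopfAlgebra.antipode (R := k) (A := H) = LinearMap.id)
    (hSH2 : HopfAlgebra.antipode (R := k) (A := H) ∘ₗ SH' = LinearMap.id) :
    conv ((opLinearEquiv k : H ≃ₗ[k] Hᵐᵒᵖ).toLinearMap ∘ₗ SH' ∘ₗ actR)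
        ((opLinearEquiv k : H ≃ₗ[k] Hᵐᵒᵖ).toLinearMap ∘ₗ actR) = cunit := by
  apply TensorProduct.ext'
  intro h b
  rw [conv_apply _ _ (reprTmul (ℛ k h) (ℛ k b))]
  have step : ∀ p ∈ (reprTmul (ℛ k h) (ℛ k b)).index,
      ((opLinearEquiv k : H ≃ₗ[k] Hᵐᵒᵖ).toLinearMap ∘ₗ SH' ∘ₗ actR)
          ((reprTmul (ℛ k h) (ℛ k b)).left p)
        * ((opLinearEquiv k : H ≃ₗ[k] Hᵐᵒᵖ).toLinearMap ∘ₗ actR)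
          ((reprTmul (ℛ k h) (ℛ k b)).right p)
      = (opLinearEquiv k : H ≃ₗ[k] Hᵐᵒᵖ).toLinearMap
          ((reprActR hmp (ℛ k h) (ℛ k b)).right p
            * SH' ((reprActR hmp (ℛ k h) (ℛ k b)).left p)) := fun p _ => rfl
  refine (Finset.sum_congr rfl step).trans ?_
  rw [← map_sum]
  refine (congrArg _ ((sum_right_mul_inv_left SH' hSH1 hSH2
    (reprActR hmp (ℛ k h) (ℛ k b))).trans
      (by rw [counit_actR_pt hmp]))).trans ?_
  rw [cunit_apply, _root_.counit_tmul]; rfl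

lemma convB (hmp : MatchedPair k B H actL actR) (SB' : B →ₗ[k] B)
    (hSB1 : SB' ∘ₗ HopfAlgebra.antipode (R := k) (A := B) = LinearMap.id)
    (hSB2 : HopfAlgebra.antipode (R := k) (A := B) ∘ₗ SB' = LinearMap.id) :
    conv ((opLinearEquiv k : B ≃ₗ[k] Bᵐᵒᵖ).toLinearMap ∘ₗ Tmap actL actR SB')
        ((opLinearEquiv k : B ≃ₗ[k] Bᵐᵒᵖ).toLinearMap ∘ₗ actL) = cunit := by
  apply TensorProduct.ext'
  intro h b
  rw [conv_apply _ _ (reprTmul (ℛ k h) (ℛ k b))]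
  have step : ∀ p ∈ (reprTmul (ℛ k h) (ℛ k b)).index,
      ((opLinearEquiv k : B ≃ₗ[k] Bᵐᵒᵖ).toLinearMap ∘ₗ Tmap actL actR SB')
          ((reprTmul (ℛ k h) (ℛ k b)).left p)
        * ((opLinearEquiv k : B ≃ₗ[k] Bᵐᵒᵖ).toLinearMap ∘ₗ actL)
          ((reprTmul (ℛ k h) (ℛ k b)).right p)
      = (opLinearEquiv k : B ≃ₗ[k] Bᵐᵒᵖ).toLinearMap
          (actL ((ℛ k h).right p.1 ⊗ₜ[k] (ℛ k b).right p.2)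
            * Tmap actL actR SB' ((ℛ k h).left p.1 ⊗ₜ[k] (ℛ k b).left p.2)) :=
    fun p _ => rfl
  refine (Finset.sum_congr rfl step).trans ?_
  rw [← map_sum]
  refine (congrArg _ (keyB hmp SB' hSB1 hSB2 h b (ℛ k h) (ℛ k b))).trans ?_
  rw [cunit_apply, _root_.counit_tmul]; rfl

lemma convD (hmp : MatchedPair k B H actL actR) (SH' : H →ₗ[k] H)
    (hSH1 : SH' ∘ₗ HopfAlgebra.antipode (R := k) (A := H) = LinearMap.id)
    (hSH2 : HopfAlgebra.antipode (R := k) (A := H) ∘ₗ SH' = LinearMap.id) :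
    conv ((opLinearEquiv k : H ≃ₗ[k] Hᵐᵒᵖ).toLinearMap ∘ₗ actR)
        ((opLinearEquiv k : H ≃ₗ[k] Hᵐᵒᵖ).toLinearMap ∘ₗ Umap actL actR SH') = cunit := by
  apply TensorProduct.ext'
  intro h b
  rw [conv_apply _ _ (reprTmul (ℛ k h) (ℛ k b))]
  have step : ∀ p ∈ (reprTmul (ℛ k h) (ℛ k b)).index,
      ((opLinearEquiv k : H ≃ₗ[k] Hᵐᵒᵖ).toLinearMap ∘ₗ actR)
          ((reprTmul (ℛ k h) (ℛ k b)).left p)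
        * ((opLinearEquiv k : H ≃ₗ[k] Hᵐᵒᵖ).toLinearMap ∘ₗ Umap actL actR SH')
          ((reprTmul (ℛ k h) (ℛ k b)).right p)
      = (opLinearEquiv k : H ≃ₗ[k] Hᵐᵒᵖ).toLinearMap
          (Umap actL actR SH' ((ℛ k h).right p.1 ⊗ₜ[k] (ℛ k b).right p.2)
            * actR ((ℛ k h).left p.1 ⊗ₜ[k] (ℛ k b).left p.2)) :=
    fun p _ => rfl
  refine (Finset.sum_congr rfl step).trans ?_
  rw [← map_sum]
  refine (congrArg _ (keyH hmp SH' hSH1 hSH2 h b (ℛ k h) (ℛ k b))).trans ?_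
  rw [cunit_apply, _root_.counit_tmul]; rfl

end MPConv

/-- For a matched pair `(B, H)` of Hopf algebras with bijective antipodes (with two-sided
inverses `S_B'`, `S_H'`):
`S_B⁻¹(h ▷ b) = Σ (h ◁ b₍₂₎) ▷ S_B⁻¹(b₍₁₎)` and
`S_H⁻¹(h ◁ b) = Σ S_H⁻¹(h₍₂₎) ◁ (h₍₁₎ ▷ b₍₁₎)` — stated as equalities of linear maps
`H ⊗ B → B` resp. `H ⊗ B → H`. -/
theorem matchedPair_antipode_inverse_identities
    (k B H : Type) [Field k] [Ring B] [HopfAlgebra k B] [Ring H] [HopfAlgebra k H]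
    (actL : H ⊗[k] B →ₗ[k] B) (actR : H ⊗[k] B →ₗ[k] H)
    (hmp : MatchedPair k B H actL actR)
    (SB' : B →ₗ[k] B) (SH' : H →ₗ[k] H)
    (hSB1 : SB' ∘ₗ HopfAlgebra.antipode (R := k) (A := B) = LinearMap.id)
    (hSB2 : HopfAlgebra.antipode (R := k) (A := B) ∘ₗ SB' = LinearMap.id)
    (hSH1 : SH' ∘ₗ HopfAlgebra.antipode (R := k) (A := H) = LinearMap.id)
    (hSH2 : HopfAlgebra.antipode (R := k) (A := H) ∘ₗ SH' = LinearMap.id) :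
    (SB' ∘ₗ actL
      = actL
        ∘ₗ LinearMap.lTensor H SB'
        ∘ₗ LinearMap.rTensor B actR
        ∘ₗ (TensorProduct.assoc k H B B).symm.toLinearMap
        ∘ₗ LinearMap.lTensor H
            ((TensorProduct.comm k B B).toLinearMap ∘ₗ Coalgebra.comul (R := k)))
    ∧ (SH' ∘ₗ actR
      = actR
        ∘ₗ LinearMap.rTensor B SH'
        ∘ₗ LinearMap.lTensor H actL
        ∘ₗ (TensorProduct.assoc k H H B).toLinearMap
        ∘ₗ LinearMap.rTensor B
            ((TensorProduct.comm k H H).toLinearMap ∘ₗ Coalgebra.comul (R := k))) := by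
  constructor
  · have e := conv_unique (convB hmp SB' hSB1 hSB2) (convA hmp SB' hSB1 hSB2)
    apply LinearMap.ext
    intro x
    exact (MulOpposite.op_injective (LinearMap.congr_fun e x)).symm
  · have e := conv_unique (convC hmp SH' hSH1 hSH2) (convD hmp SH' hSH1 hSH2)
    apply LinearMap.ext
    intro x
    exact MulOpposite.op_injective (LinearMap.congr_fun e x)
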